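/- Let E be a Banach lattice and let 𝒢 ⊆ L(E) be a subgroup of the group of invertible bounded linear operators on E which is compact in the operator norm topology and divisible (for each g ∈ 𝒢 and n ∈ ℕ there exists h ∈ 𝒢 with h^n = g), and assume that each operator in 𝒢 is positive. Then 𝒢 = {id_E}. -/

import Mathlib

open Filter Topology

section helpers
variable {E : Type*} [NormedAddCommGroup E] [Lattice E] [HasSolidNorm E]
    [IsOrderedAddMonoid E] [NormedSpace ℝ E]

/-- A positive operator is monotone. -/
lemma st12_mono (A : E →L[ℝ] E) (hA : ∀ x : E, 0 ≤ x → 0 ≤ A x) {x y : E} (h : x ≤ y) :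
    A x ≤ A y := by
  have := hA (y - x) (sub_nonneg.2 h)
  rw [map_sub] at this
  exact sub_nonneg.1 this

lemma st12_abs_le (A : E →L[ℝ] E) (hA : ∀ x : E, 0 ≤ x → 0 ≤ A x) (x : E) :
    |A x| ≤ A |x| := by
  refine sup_le (st12_mono A hA (le_abs_self (α := E) x)) ?_
  have h1 : 0 ≤ A (x + |x|) := hA _ (by
    have h := add_le_add_left (neg_le_abs x) x
    rwa [neg_add_cancel, add_comm] at h)
  rw [map_add] at h1
  calc -A x = 0 - A x := by rw [zero_sub]
  _ ≤ (A x + A |x|) - A x := sub_le_sub_right h1 _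
  _ = A |x| := by abel

/-- An invertible operator which is positive with positive inverse preserves `|·|`. -/
lemma st12_abs (A B : E →L[ℝ] E) (hA : ∀ x : E, 0 ≤ x → 0 ≤ A x)
    (hB : ∀ x : E, 0 ≤ x → 0 ≤ B x) (hAB : A * B = 1) (hBA : B * A = 1) (x : E) :
    A |x| = |A x| := by
  refine le_antisymm ?_ (st12_abs_le A hA x)
  have h1 : |x| ≤ B |A x| := by
    have := st12_abs_le B hB (A x)
    rwa [show B (A x) = x by rw [← ContinuousLinearMap.mul_apply, hBA,
      ContinuousLinearMap.one_apply]] at this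
  have h2 := st12_mono A hA h1
  rwa [show A (B |A x|) = |A x| by rw [← ContinuousLinearMap.mul_apply, hAB,
    ContinuousLinearMap.one_apply]] at h2

lemma st12_half {p q : E} (h : p + p = q + q) : p = q := by
  have h2 : p = ((2 : ℝ)⁻¹) • (p + p) := by
    rw [← two_smul ℝ p, smul_smul]; norm_num
  rw [h2, h, ← two_smul ℝ q, smul_smul]; norm_num

/-- Positive-with-positive-inverse operators preserve infima. -/
lemma st12_inf (A B : E →L[ℝ] E) (hA : ∀ x : E, 0 ≤ x → 0 ≤ A x)
    (hB : ∀ x : E, 0 ≤ x → 0 ≤ B x) (hAB : A * B = 1) (hBA : B * A = 1) (x y : E) :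
    A (x ⊓ y) = A x ⊓ A y := by
  apply st12_half
  have e1 : ∀ a b : E, (a ⊓ b) + (a ⊓ b) = a + b - |b - a| := by
    intro a b
    have h1 := inf_add_sup a b
    have h2 := sup_sub_inf_eq_abs_sub a b
    have h3 : a ⊔ b = a ⊓ b + |b - a| := by rw [← h2]; abel
    rw [h3] at h1
    rw [← h1]; abel
  calc A (x ⊓ y) + A (x ⊓ y) = A ((x ⊓ y) + (x ⊓ y)) := (map_add A _ _).symm
  _ = A (x + y - |y - x|) := by rw [e1]
  _ = A x + A y - A |y - x| := by rw [map_sub, map_add]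
  _ = A x + A y - |A y - A x| := by rw [st12_abs A B hA hB hAB hBA, map_sub]
  _ = (A x ⊓ A y) + (A x ⊓ A y) := (e1 _ _).symm



/-- Band lemma: an operator in a group of positive operators at distance `< 1` from the
identity preserves disjointness. -/
lemma st12_band (T S : E →L[ℝ] E) (hT : ∀ x : E, 0 ≤ x → 0 ≤ T x)
    (hS : ∀ x : E, 0 ≤ x → 0 ≤ S x) (hTS : T * S = 1) (hST : S * T = 1)
    (hsmall : ‖T - 1‖ < 1) {u v : E} (hu : 0 ≤ u) (hv : 0 ≤ v) (huv : u ⊓ v = 0) :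
    T u ⊓ v = 0 := by
  set z := T u ⊓ v with hzdef
  have hz0 : 0 ≤ z := le_inf (hT u hu) hv
  set w := S z with hwdef
  have hw0 : 0 ≤ w := hS z hz0
  have hTw : T w = z := by
    rw [hwdef, ← ContinuousLinearMap.mul_apply, hTS, ContinuousLinearMap.one_apply]
  have hwu : w ≤ u := by
    have hw2 : w = u ⊓ S v := by
      rw [hwdef, hzdef, st12_inf S T hS hT hST hTS,
        show S (T u) = u from by
          rw [← ContinuousLinearMap.mul_apply, hST, ContinuousLinearMap.one_apply]]
    rw [hw2]; exact inf_le_left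
  have hwz : w ⊓ T w = 0 := by
    rw [hTw]
    refine le_antisymm ?_ (le_inf hw0 hz0)
    calc w ⊓ z ≤ u ⊓ v := inf_le_inf hwu inf_le_right
    _ = 0 := huv
  have hw : w = 0 := by
    by_contra hne
    have habs : |T w - w| = T w + w := by
      have h1 := sup_sub_inf_eq_abs_sub w (T w)
      have h2 := inf_add_sup w (T w)
      rw [hwz] at h1 h2
      rw [← h1, sub_zero, add_comm, ← h2, zero_add]
    have h1 : w ≤ |T w - w| := by
      rw [habs]
      exact le_add_of_nonneg_left (hT w hw0)
    have h2 : ‖w‖ ≤ ‖T w - w‖ := by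
      refine norm_le_norm_of_abs_le_abs ?_
      rw [abs_of_nonneg hw0]
      exact h1
      
    have h3 : ‖T w - w‖ ≤ ‖T - 1‖ * ‖w‖ := by
      have he : T w - w = (T - 1) w := by
        rw [ContinuousLinearMap.sub_apply, ContinuousLinearMap.one_apply]
      rw [he]
      exact (T - 1).le_opNorm w
    have hp : 0 < ‖w‖ := norm_pos_iff.2 hne
    nlinarith
  rw [hzdef] at hTw ⊢
  rw [← hTw, hw, map_zero]

lemma st12_inf_add {u p q : E} (hu : 0 ≤ u) (hp : 0 ≤ p) (hq : 0 ≤ q) :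
    u ⊓ (p + q) ≤ u ⊓ p + u ⊓ q := by
  set s := u ⊓ (p + q) with hs
  have key : s - u ⊓ p ≤ u ⊓ q := by
    rw [sub_inf]
    refine sup_le ?_ ?_
    · have h1 : s - u ≤ 0 := sub_nonpos.2 inf_le_left
      exact h1.trans (le_inf hu hq)
    · refine le_inf ?_ ?_
      · exact sub_le_iff_le_add.2 (le_trans inf_le_left (le_add_of_nonneg_right hp))
      · refine sub_le_iff_le_add.2 (le_trans inf_le_right ?_)
        rw [add_comm]
  have := sub_le_iff_le_add.1 key
  rwa [add_comm] at this

lemma st12_inf_sum (u : E) (hu : 0 ≤ u) (n : ℕ) (f : ℕ → E) (hf : ∀ k, 0 ≤ f k)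
    (h : ∀ k, u ⊓ f k = 0) : u ⊓ (∑ k ∈ Finset.range n, f k) = 0 := by
  induction n with
  | zero => simpa using inf_eq_right.2 hu
  | succ n ih =>
    rw [Finset.sum_range_succ]
    refine le_antisymm ?_ (le_inf hu (add_nonneg (Finset.sum_nonneg fun k _ => hf k) (hf n)))
    calc u ⊓ (∑ k ∈ Finset.range n, f k + f n)
        ≤ u ⊓ (∑ k ∈ Finset.range n, f k) + u ⊓ f n :=
          st12_inf_add hu (Finset.sum_nonneg fun k _ => hf k) (hf n)
    _ = 0 := by rw [ih, h n, add_zero]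

/-- **Key lemma**: an element of a bounded group of positive operators which is at distance
less than 1 from the identity and has powers recurrent to the identity equals the identity. -/
lemma st12_key (T S : E →L[ℝ] E) (hT : ∀ x : E, 0 ≤ x → 0 ≤ T x)
    (hS : ∀ x : E, 0 ≤ x → 0 ≤ S x) (hTS : T * S = 1) (hST : S * T = 1)
    (hrec : ∀ η : ℝ, 0 < η → ∃ n : ℕ, 0 < n ∧ ‖T ^ n - 1‖ < η)
    (hsmall : ‖T - 1‖ < 1) : T = 1 := by
  have hTk : ∀ (k : ℕ) (x : E), 0 ≤ x → 0 ≤ (T ^ k) x := by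
    intro k
    induction k with
    | zero => intro x hx; simpa using hx
    | succ k ih =>
      intro x hx
      rw [pow_succ, ContinuousLinearMap.mul_apply]
      exact ih _ (hT x hx)
  have hTkinf : ∀ (k : ℕ) (x y : E), (T ^ k) (x ⊓ y) = (T ^ k) x ⊓ (T ^ k) y := by
    intro k
    induction k with
    | zero => intro x y; simp
    | succ k ih =>
      intro x y
      rw [pow_succ, ContinuousLinearMap.mul_apply, ContinuousLinearMap.mul_apply,
        ContinuousLinearMap.mul_apply, st12_inf T S hT hS hTS hST, ih]
  have hband : ∀ u v : E, 0 ≤ u → 0 ≤ v → u ⊓ v = 0 → ∀ k : ℕ, ((T ^ k) u) ⊓ v = 0 := by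
    intro u v hu hv huv k
    induction k with
    | zero => simpa using huv
    | succ k ih =>
      have h1 := st12_band T S hT hS hTS hST hsmall (hTk k u hu) hv ih
      rwa [pow_succ', ContinuousLinearMap.mul_apply]
  have hfix : ∀ x : E, 0 ≤ x → T x = x := by
    intro x hx
    set d := T x - x with hd
    set a := d ⊔ 0 with ha
    set b := a - d with hb
    have ha0 : (0 : E) ≤ a := le_sup_right
    have hb0 : (0 : E) ≤ b := sub_nonneg.2 le_sup_left
    have hd_ab : d = a - b := by rw [hb]; abel
    have hab : a ⊓ b = 0 := by
      have h1 : a ⊓ b = a + (0 ⊓ (-d)) := by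
        rw [add_inf, add_zero, hb, sub_eq_add_neg]
      have h2 : (0 : E) ⊓ (-d) = -a := by
        rw [ha, neg_sup, neg_zero]
        exact inf_comm _ _
      rw [h1, h2, add_neg_cancel]
    have hkey : ∀ η : ℝ, 0 < η → ‖a‖ ≤ η * ‖x‖ ∧ ‖b‖ ≤ η * ‖x‖ := by
      intro η hη
      obtain ⟨n, hn1, hnc⟩ := hrec η hη
      set A := ∑ k ∈ Finset.range n, (T ^ k) a with hA
      set B := ∑ k ∈ Finset.range n, (T ^ k) b with hB
      have hdis : ∀ j k : ℕ, ((T ^ k) a) ⊓ ((T ^ j) b) = 0 := by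
        intro j k
        rcases le_total j k with h | h
        · have h2 := hband a b ha0 hb0 hab (k - j)
          have h3 : (T ^ j) (((T ^ (k - j)) a) ⊓ b) = 0 := by rw [h2, map_zero]
          rw [hTkinf] at h3
          rw [show (T ^ j) ((T ^ (k - j)) a) = (T ^ k) a from by
            rw [← ContinuousLinearMap.mul_apply, ← pow_add, Nat.add_sub_cancel' h]] at h3
          exact h3
        · have h2 := hband b a hb0 ha0 (by rw [inf_comm, hab]) (j - k)
          have h3 : (T ^ k) (((T ^ (j - k)) b) ⊓ a) = 0 := by rw [h2, map_zero]
          rw [hTkinf] at h3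
          rw [show (T ^ k) ((T ^ (j - k)) b) = (T ^ j) b from by
            rw [← ContinuousLinearMap.mul_apply, ← pow_add, Nat.add_sub_cancel' h]] at h3
          rw [inf_comm] at h3
          exact h3
      have hA0 : (0 : E) ≤ A := Finset.sum_nonneg fun k _ => hTk k a ha0
      have hB0 : (0 : E) ≤ B := Finset.sum_nonneg fun k _ => hTk k b hb0
      have hABdis : A ⊓ B = 0 := by
        have h4 : ∀ k : ℕ, ((T ^ k) a) ⊓ B = 0 := fun k =>
          st12_inf_sum _ (hTk k a ha0) n _ (fun j => hTk j b hb0) (fun j => hdis j k)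
        have h5 : B ⊓ A = 0 :=
          st12_inf_sum B hB0 n _ (fun k => hTk k a ha0)
            (fun k => by rw [inf_comm]; exact h4 k)
        rw [inf_comm]; exact h5
      have hsum : (T ^ n) x - x = A - B := by
        have htel : ∑ k ∈ Finset.range n, ((T ^ (k + 1)) x - (T ^ k) x)
            = (T ^ n) x - (T ^ 0) x := Finset.sum_range_sub (fun k => (T ^ k) x) n
        have hterm : ∀ k : ℕ, (T ^ (k + 1)) x - (T ^ k) x = (T ^ k) a - (T ^ k) b := by
          intro k
          rw [← map_sub, ← hd_ab, hd, pow_succ, ContinuousLinearMap.mul_apply, map_sub]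
        calc (T ^ n) x - x = (T ^ n) x - (T ^ 0) x := by rw [pow_zero]; rfl
        _ = ∑ k ∈ Finset.range n, ((T ^ (k + 1)) x - (T ^ k) x) := htel.symm
        _ = ∑ k ∈ Finset.range n, ((T ^ k) a - (T ^ k) b) := by
            exact Finset.sum_congr rfl fun k _ => hterm k
        _ = A - B := Finset.sum_sub_distrib _ _
      have habs2 : |(T ^ n) x - x| = A + B := by
        rw [hsum]
        have h1 := sup_sub_inf_eq_abs_sub B A
        rw [inf_comm, hABdis, sub_zero] at h1
        have h6 := inf_add_sup A B
        rw [hABdis, zero_add] at h6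
        rw [← h1, sup_comm]
        exact h6
      have hAa : a ≤ A := by
        have := Finset.single_le_sum (f := fun k => (T ^ k) a)
          (fun k _ => hTk k a ha0) (Finset.mem_range.2 hn1)
        simpa [hA] using this
      have hBb : b ≤ B := by
        have := Finset.single_le_sum (f := fun k => (T ^ k) b)
          (fun k _ => hTk k b hb0) (Finset.mem_range.2 hn1)
        simpa [hB] using this
      have hnormv : ‖(T ^ n) x - x‖ ≤ η * ‖x‖ := by
        have h7 : (T ^ n) x - x = (T ^ n - 1) x := by
          rw [ContinuousLinearMap.sub_apply, ContinuousLinearMap.one_apply]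
        rw [h7]
        calc ‖(T ^ n - 1) x‖ ≤ ‖T ^ n - 1‖ * ‖x‖ := (T ^ n - 1).le_opNorm x
        _ ≤ η * ‖x‖ := mul_le_mul_of_nonneg_right hnc.le (norm_nonneg x)
      constructor
      · refine le_trans (norm_le_norm_of_abs_le_abs ?_) hnormv
        rw [abs_of_nonneg ha0, habs2]
        exact le_trans hAa (le_add_of_nonneg_right hB0)
      · refine le_trans (norm_le_norm_of_abs_le_abs ?_) hnormv
        rw [abs_of_nonneg hb0, habs2]
        exact le_trans hBb (le_add_of_nonneg_left hA0)
    have hnorm0 : ∀ c : E, (∀ η : ℝ, 0 < η → ‖c‖ ≤ η * ‖x‖) → c = 0 := by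
      intro c hc
      by_contra hne
      have hp : 0 < ‖c‖ := norm_pos_iff.2 hne
      have hq : 0 < ‖x‖ + 1 := by positivity
      have := hc (‖c‖ / (2 * (‖x‖ + 1))) (by positivity)
      have h8 : ‖c‖ / (2 * (‖x‖ + 1)) * ‖x‖ < ‖c‖ := by
        rw [div_mul_eq_mul_div, div_lt_iff₀ (by positivity)]
        nlinarith
      linarith
    have ha' : a = 0 := hnorm0 a fun η hη => (hkey η hη).1
    have hb' : b = 0 := hnorm0 b fun η hη => (hkey η hη).2
    have hd0 : d = 0 := by rw [hd_ab, ha', hb', sub_zero]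
    have := hd0
    rw [hd] at this
    exact sub_eq_zero.1 this
  ext x
  have h1 := hfix (x ⊔ 0) le_sup_right
  have h2 := hfix (x ⊔ 0 - x) (sub_nonneg.2 le_sup_left)
  have h3 : T x = T (x ⊔ 0) - T (x ⊔ 0 - x) := by rw [map_sub]; abel
  rw [h3, h1, h2, ContinuousLinearMap.one_apply]
  abel

end helpers

/-- Let `E` be a Banach lattice and `𝒢 ⊆ L(E)` a divisible subgroup of the
invertible operators which is compact in the operator norm topology and consists of positive
operators. Then `𝒢 = {id_E}`. -/
theorem statement12 {E : Type*} [NormedAddCommGroup E] [Lattice E] [HasSolidNorm E]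
    [IsOrderedAddMonoid E] [NormedSpace ℝ E]
    [CompleteSpace E]
    (G : Set (E →L[ℝ] E))
    (hone : (1 : E →L[ℝ] E) ∈ G)
    (hmul : ∀ A ∈ G, ∀ B ∈ G, A * B ∈ G)
    (hinv : ∀ A ∈ G, ∃ B ∈ G, A * B = 1 ∧ B * A = 1)
    (hcp : IsCompact G)
    (hdiv : ∀ A ∈ G, ∀ n : ℕ, 0 < n → ∃ B ∈ G, B ^ n = A)
    (hpos : ∀ A ∈ G, ∀ x : E, 0 ≤ x → 0 ≤ A x) :
    G = {1} := by
  classical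
  refine Set.eq_singleton_iff_unique_mem.2 ⟨hone, ?_⟩
  obtain ⟨C, hC⟩ : ∃ C : ℝ, ∀ g ∈ G, ‖g‖ ≤ C := isBounded_iff_forall_norm_le.1 hcp.isBounded
  set M := max C 1 with hMdef
  have hM1 : (1 : ℝ) ≤ M := le_max_right _ _
  have hM0 : (0 : ℝ) < M := lt_of_lt_of_le one_pos hM1
  have hMg : ∀ g ∈ G, ‖g‖ ≤ M := fun g hg => (hC g hg).trans (le_max_left _ _)
  have hpow_mem : ∀ g ∈ G, ∀ k : ℕ, g ^ k ∈ G := by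
    intro g hg k
    induction k with
    | zero => simpa using hone
    | succ k ih => rw [pow_succ]; exact hmul _ ih _ hg
  have hSkTk : ∀ g h : E →L[ℝ] E, g * h = 1 → h * g = 1 → ∀ k : ℕ, h ^ k * g ^ k = 1 := by
    intro g h hgh hhg k
    induction k with
    | zero => simp
    | succ k ih =>
      rw [pow_succ h, pow_succ' g, mul_assoc, ← mul_assoc h, hhg, one_mul, ih]
  have hrec : ∀ T ∈ G, ∀ η : ℝ, 0 < η → ∃ n : ℕ, 0 < n ∧ ‖T ^ n - 1‖ < η := by
    intro T hTG η hη
    obtain ⟨Sq, hSG, hTS, hST⟩ := hinv T hTG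
    obtain ⟨L, hLG, φ, hφ, hconv⟩ :=
      hcp.tendsto_subseq (x := fun k : ℕ => T ^ k) (fun k => hpow_mem T hTG k)
    obtain ⟨N, hN⟩ := (Metric.tendsto_atTop.1 hconv) (η / (2 * M)) (by positivity)
    have d1 := hN N (le_refl N)
    have d2 := hN (N + 1) (Nat.le_succ N)
    simp only [Function.comp_apply] at d1 d2
    have hdist : ‖T ^ φ (N + 1) - T ^ φ N‖ < η / M := by
      have h9 := dist_triangle_right (T ^ φ (N + 1)) (T ^ φ N) L
      rw [← dist_eq_norm]
      calc dist (T ^ φ (N + 1)) (T ^ φ N) ≤ _ + _ := h9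
      _ < η / (2 * M) + η / (2 * M) := add_lt_add d2 d1
      _ = η / M := by field_simp; ring
    set n := φ (N + 1) - φ N with hndef
    have hφlt : φ N < φ (N + 1) := hφ (Nat.lt_succ_self N)
    have hn1 : 0 < n := by omega
    have hadd : φ N + n = φ (N + 1) := by omega
    refine ⟨n, hn1, ?_⟩
    have hq := hSkTk T Sq hTS hST (φ N)
    have hexp : T ^ n - 1 = Sq ^ φ N * (T ^ φ (N + 1) - T ^ φ N) := by
      rw [mul_sub, hq, ← hadd, pow_add, ← mul_assoc, hq, one_mul]
    rw [hexp]
    calc ‖Sq ^ φ N * (T ^ φ (N + 1) - T ^ φ N)‖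
        ≤ ‖Sq ^ φ N‖ * ‖T ^ φ (N + 1) - T ^ φ N‖ := norm_mul_le _ _
    _ ≤ M * ‖T ^ φ (N + 1) - T ^ φ N‖ :=
        mul_le_mul_of_nonneg_right (hMg _ (hpow_mem Sq hSG _)) (norm_nonneg _)
    _ < M * (η / M) := mul_lt_mul_of_pos_left hdist hM0
    _ = η := by field_simp
  have hkey1 : ∀ T ∈ G, ‖T - 1‖ < 1 → T = 1 := by
    intro T hTG hs
    obtain ⟨Sq, hSG, hTS, hST⟩ := hinv T hTG
    exact st12_key T Sq (hpos T hTG) (hpos Sq hSG) hTS hST (hrec T hTG) hs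
  have hsep : ∀ A ∈ G, ∀ B ∈ G, ‖B - A‖ < 1 / M → B = A := by
    intro A hA B hB hd
    obtain ⟨C', hCG, hAC, hCA⟩ := hinv A hA
    have h1 : C' * B ∈ G := hmul _ hCG _ hB
    have h2 : ‖C' * B - 1‖ < 1 := by
      have he : C' * B - 1 = C' * (B - A) := by rw [mul_sub, hCA]
      rw [he]
      calc ‖C' * (B - A)‖ ≤ ‖C'‖ * ‖B - A‖ := norm_mul_le _ _
      _ ≤ M * ‖B - A‖ := mul_le_mul_of_nonneg_right (hMg _ hCG) (norm_nonneg _)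
      _ < M * (1 / M) := mul_lt_mul_of_pos_left hd hM0
      _ = 1 := by field_simp
    have h3 : C' * B = 1 := hkey1 _ h1 h2
    calc B = (A * C') * B := by rw [hAC, one_mul]
    _ = A * (C' * B) := mul_assoc _ _ _
    _ = A := by rw [h3, mul_one]
  have hfin : G.Finite := by
    have hr0 : (0 : ℝ) < 1 / (2 * M) := by positivity
    obtain ⟨t, ht⟩ := hcp.elim_finite_subcover
      (fun A : E →L[ℝ] E => Metric.ball A (1 / (2 * M)))
      (fun A => Metric.isOpen_ball)
      (fun g hg => Set.mem_iUnion.2 ⟨g, Metric.mem_ball_self hr0⟩)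
    have hsub : ∀ A : E →L[ℝ] E, (G ∩ Metric.ball A (1 / (2 * M))).Subsingleton := by
      intro A g1 hg1 g2 hg2
      refine hsep g2 hg2.1 g1 hg1.1 ?_
      have e1 : dist g1 A < 1 / (2 * M) := Metric.mem_ball.1 hg1.2
      have e2 : dist g2 A < 1 / (2 * M) := Metric.mem_ball.1 hg2.2
      have e3 : dist g1 g2 ≤ dist g1 A + dist g2 A := dist_triangle_right _ _ _
      rw [← dist_eq_norm]
      calc dist g1 g2 ≤ dist g1 A + dist g2 A := e3
      _ < 1 / (2 * M) + 1 / (2 * M) := add_lt_add e1 e2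
      _ = 1 / M := by field_simp; ring_nf
    refine Set.Finite.subset (Set.Finite.biUnion t.finite_toSet
      (fun A _ => (hsub A).finite)) (fun g hg => ?_)
    have hgU := ht hg
    rw [Set.mem_iUnion₂] at hgU
    obtain ⟨A, hAt, hgA⟩ := hgU
    exact Set.mem_biUnion hAt ⟨hg, hgA⟩
  intro g hg
  set N := hfin.toFinset.card with hNdef
  obtain ⟨h, hhG, hpow⟩ := hdiv g hg (Nat.factorial N) (Nat.factorial_pos N)
  have hmaps : ∀ k ∈ Finset.range (N + 1), h ^ k ∈ hfin.toFinset :=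
    fun k _ => hfin.mem_toFinset.2 (hpow_mem h hhG k)
  obtain ⟨i, hi, j, hj, hij, hfeq⟩ :=
    Finset.exists_ne_map_eq_of_card_lt_of_maps_to
      (by rw [Finset.card_range]; omega) hmaps
  have hcancel : ∀ i j : ℕ, i < j → h ^ i = h ^ j → h ^ (j - i) = 1 := by
    intro i j hlt heq
    obtain ⟨Sh, hShG, hhS, hSh⟩ := hinv h hhG
    have hq := hSkTk h Sh hhS hSh i
    have hsplit : h ^ j = h ^ i * h ^ (j - i) := by
      rw [← pow_add, Nat.add_sub_cancel' hlt.le]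
    calc h ^ (j - i) = 1 * h ^ (j - i) := (one_mul _).symm
    _ = Sh ^ i * h ^ i * h ^ (j - i) := by rw [hq]
    _ = Sh ^ i * (h ^ i * h ^ (j - i)) := mul_assoc _ _ _
    _ = Sh ^ i * h ^ j := by rw [← hsplit]
    _ = Sh ^ i * h ^ i := by rw [← heq]
    _ = 1 := hq
  have hcore : ∃ e : ℕ, 0 < e ∧ e ≤ N ∧ h ^ e = 1 := by
    rcases Nat.lt_or_ge i j with hlt | hge
    · have hjN : j ≤ N := by have := Finset.mem_range.1 hj; omega
      exact ⟨j - i, by omega, by omega, hcancel i j hlt hfeq⟩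
    · have hlt : j < i := by omega
      have hiN : i ≤ N := by have := Finset.mem_range.1 hi; omega
      exact ⟨i - j, by omega, by omega, hcancel j i hlt hfeq.symm⟩
  obtain ⟨e, he0, heN, hee⟩ := hcore
  obtain ⟨m, hm⟩ := Nat.dvd_factorial he0 heN
  rw [← hpow, hm, pow_mul, hee, one_pow]
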